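/- For the ladder n-level closed-loop system, along any closed-loop solution ψ the Lyapunov function value t ↦ V(ψ(t)) = 1 − |ψₙ(t)|² is differentiable with derivative d/dt V(ψ(t)) = −2 k_{n−1} |ψₙ(t)| · |c_{n−1}(ψ(t))|^{α_{n−1}+1} for every t ≥ 0; in particular t ↦ V(ψ(t)) is nonincreasing. -/

import Mathlib

open scoped BigOperators

/-- The real matrix `X_p` (embedded in ℂ) of the ladder system: entry `-1` at
position `(p, p+1)` and entry `1` at position `(p+1, p)` (0-based indices),
all other entries `0`. -/
noncomputable def ladderX (n : ℕ) (p : ℕ) : Matrix (Fin n) (Fin n) ℂ :=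
  Matrix.of fun i j =>
    if (i : ℕ) = p ∧ (j : ℕ) = p + 1 then -1
    else if (i : ℕ) = p + 1 ∧ (j : ℕ) = p then 1 else 0

/-- The control Hamiltonian `H_p = i X_p`. -/
noncomputable def ladderHc (n : ℕ) (p : ℕ) : Matrix (Fin n) (Fin n) ℂ :=
  Complex.I • ladderX n p

/-- `c_p(ψ) = |ψ_p| cos (arg ψ_{p+1} - arg ψ_p)` (0-based indices, so this is the
`p`-th control channel coupling levels `p` and `p+1`); `arg 0 = 0` by convention. -/
noncomputable def ladderC (n : ℕ) (p : ℕ) (ψ : Fin n → ℂ) : ℝ :=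
  if h : p + 1 < n then
    ‖ψ ⟨p, Nat.lt_of_succ_lt h⟩‖ *
      Real.cos ((ψ ⟨p + 1, h⟩).arg - (ψ ⟨p, Nat.lt_of_succ_lt h⟩).arg)
  else 0

/-- The feedback control `u_p(ψ) = k_p sign(c_p(ψ)) |c_p(ψ)|^{α_p}` (real power). -/
noncomputable def ladderU (n : ℕ) (k α : ℕ → ℝ) (p : ℕ) (ψ : Fin n → ℂ) : ℝ :=
  k p * Real.sign (ladderC n p ψ) * |ladderC n p ψ| ^ (α p)

/-- A closed-loop solution: a continuously differentiable `ψ : [0,∞) → ℂⁿ` with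
`i ψ'(t) = (H₀ + ∑_p u_p(ψ(t)) H_p) ψ(t)` for all `t ≥ 0`, where
`H₀ = diag(λ₁,…,λₙ)`. -/
def IsLadderSolution (n : ℕ) (lam : Fin n → ℝ) (k α : ℕ → ℝ)
    (ψ : ℝ → Fin n → ℂ) : Prop :=
  ContDiffOn ℝ 1 ψ (Set.Ici 0) ∧
  ∀ t ∈ Set.Ici (0 : ℝ),
    Complex.I • derivWithin ψ (Set.Ici 0) t =
      (Matrix.diagonal (fun i => (lam i : ℂ)) +
        ∑ p ∈ Finset.range (n - 1), (ladderU n k α p (ψ t) : ℂ) • ladderHc n p).mulVec (ψ t)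

/-- Along any closed-loop solution of the ladder n-level system, the
Lyapunov function `t ↦ V(ψ(t)) = 1 - |ψₙ(t)|²` is differentiable with derivative
`-2 k_{n-1} |ψₙ(t)| |c_{n-1}(ψ(t))|^{α_{n-1}+1}` for all `t ≥ 0` (the last control
channel has 0-based index `n-2`); in particular `t ↦ V(ψ(t))` is nonincreasing. -/
theorem ladder_lyapunov_derivative
    (n : ℕ) (hn : 2 ≤ n) (lam : Fin n → ℝ) (hlam : Function.Injective lam)
    (k α : ℕ → ℝ) (hk : ∀ p, p < n - 1 → 0 < k p)
    (hα : ∀ p, p < n - 1 → α p ∈ Set.Ioo (0 : ℝ) 1)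
    (ψ : ℝ → Fin n → ℂ) (hψ : IsLadderSolution n lam k α ψ) :
    (∀ t ∈ Set.Ici (0 : ℝ),
      HasDerivWithinAt (fun s => 1 - ‖ψ s ⟨n - 1, by omega⟩‖ ^ 2)
        (-2 * k (n - 2) * ‖ψ t ⟨n - 1, by omega⟩‖ *
          |ladderC n (n - 2) (ψ t)| ^ (α (n - 2) + 1))
        (Set.Ici 0) t) ∧
    AntitoneOn (fun s => 1 - ‖ψ s ⟨n - 1, by omega⟩‖ ^ 2) (Set.Ici 0) := by
  obtain ⟨hsmooth, hode⟩ := hψ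
  have hn1 : n - 1 < n := by omega
  have hn2 : n - 2 < n := by omega
  set m : Fin n := ⟨n - 1, hn1⟩ with hm
  set m' : Fin n := ⟨n - 2, hn2⟩ with hm'
  have hmem : n - 2 ∈ Finset.range (n - 1) := Finset.mem_range.2 (by omega)
  have hαmem := hα (n - 2) (by omega)
  have hkpos := hk (n - 2) (by omega)
  have hmv : (m : ℕ) = n - 1 := rfl
  have hentry : ∀ p, p < n - 1 → ∀ j : Fin n,
      ladderHc n p m j = if p = n - 2 ∧ (j : ℕ) = n - 2 then Complex.I else 0 := by
    intro p hp j
    simp only [ladderHc, ladderX, Matrix.smul_apply, Matrix.of_apply, smul_eq_mul]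
    by_cases hcond : p = n - 2 ∧ (j : ℕ) = n - 2
    · rw [if_pos hcond, if_neg (show ¬((m : ℕ) = p ∧ (j : ℕ) = p + 1) by omega),
        if_pos (show (m : ℕ) = p + 1 ∧ (j : ℕ) = p by omega), mul_one]
    · rw [if_neg hcond, if_neg (show ¬((m : ℕ) = p ∧ (j : ℕ) = p + 1) by omega),
        if_neg (show ¬((m : ℕ) = p + 1 ∧ (j : ℕ) = p) by intro h; exact hcond (by omega)),
        mul_zero]
  have key : ∀ t ∈ Set.Ici (0:ℝ), HasDerivWithinAt (fun s => 1 - ‖ψ s m‖ ^ 2)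
      (-2 * k (n-2) * ‖ψ t m‖ * |ladderC n (n-2) (ψ t)| ^ (α (n-2) + 1))
      (Set.Ici 0) t := by
    intro t ht
    have hD : HasDerivWithinAt ψ (derivWithin ψ (Set.Ici 0) t) (Set.Ici 0) t :=
      ((hsmooth.differentiableOn one_ne_zero) t ht).hasDerivWithinAt
    set D := derivWithin ψ (Set.Ici 0) t with hDdef
    set u : ℝ := ladderU n k α (n-2) (ψ t) with hu
    set a : ℂ := ψ t m with ha
    set b : ℂ := ψ t m' with hb
    set c : ℝ := ladderC n (n-2) (ψ t) with hc
    have hsum : ∀ j : Fin n,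
        ∑ p ∈ Finset.range (n-1), (ladderU n k α p (ψ t) : ℂ) * ladderHc n p m j =
        if (j : ℕ) = n - 2 then (u : ℂ) * Complex.I else 0 := by
      intro j
      rw [Finset.sum_congr rfl fun p hp => by rw [hentry p (Finset.mem_range.1 hp) j]]
      by_cases hj : (j : ℕ) = n - 2
      · rw [if_pos hj]
        rw [Finset.sum_congr rfl (fun p _ => by rw [if_congr (and_iff_left hj) rfl rfl])]
        rw [Finset.sum_eq_single (n-2) (fun p _ hpne => by rw [if_neg hpne, mul_zero])
          (fun h => absurd hmem h), if_pos rfl]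
      · rw [if_neg hj]
        exact Finset.sum_eq_zero fun p _ => by rw [if_neg (fun h => hj h.2), mul_zero]
    have h2 : Complex.I * D m = (lam m : ℂ) * a + (u : ℂ) * Complex.I * b := by
      have h1 := congrFun (hode t ht) m
      simp only [Pi.smul_apply, smul_eq_mul] at h1
      rw [h1]
      have expand : ((Matrix.diagonal fun i => (lam i : ℂ)) +
          ∑ p ∈ Finset.range (n - 1), (ladderU n k α p (ψ t) : ℂ) • ladderHc n p).mulVec
            (ψ t) m =
          ∑ j : Fin n, (Matrix.diagonal (fun i => (lam i : ℂ)) m j +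
            ∑ p ∈ Finset.range (n-1), (ladderU n k α p (ψ t) : ℂ) * ladderHc n p m j) *
              ψ t j := by
        simp only [Matrix.mulVec, dotProduct, Matrix.add_apply, Matrix.sum_apply,
          Matrix.smul_apply, smul_eq_mul]
      rw [expand, Finset.sum_congr rfl fun j _ => by rw [hsum j],
        Finset.sum_congr rfl fun j (_ : j ∈ Finset.univ) => add_mul
          (Matrix.diagonal (fun i => (lam i : ℂ)) m j)
          (if (j : ℕ) = n - 2 then (u : ℂ) * Complex.I else 0) (ψ t j),
        Finset.sum_add_distrib]
      congr 1
      · rw [Finset.sum_congr rfl fun j _ => by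
            rw [Matrix.diagonal_apply, ite_mul, zero_mul],
          Finset.sum_ite_eq Finset.univ m (fun j => (lam m : ℂ) * ψ t j), if_pos (Finset.mem_univ m)]
      · rw [Finset.sum_congr rfl fun j _ => by
            rw [ite_mul, zero_mul,
              if_congr (show ((j : ℕ) = n - 2) ↔ (j = m') by simp [hm', Fin.ext_iff]) rfl rfl],
          Finset.sum_ite_eq' Finset.univ m' (fun j => (u : ℂ) * Complex.I * ψ t j),
          if_pos (Finset.mem_univ m')]
    have hDmval : D m = -Complex.I * (lam m : ℂ) * a + (u : ℂ) * b := by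
      rw [show -Complex.I * (lam m : ℂ) * a + (u : ℂ) * b =
          -Complex.I * ((lam m : ℂ) * a + (u : ℂ) * Complex.I * b) from by
        linear_combination ((u : ℂ) * b) * Complex.I_mul_I,
        ← h2, ← mul_assoc, neg_mul, Complex.I_mul_I, neg_neg, one_mul]
    have hDm : HasDerivWithinAt (fun s => ψ s m) (D m) (Set.Ici 0) t := by
      exact (ContinuousLinearMap.proj (R := ℝ) (φ := fun _ : Fin n => ℂ)
        m).hasFDerivAt.comp_hasDerivWithinAt t hD
    have hre : HasDerivWithinAt (fun s => (ψ s m).re) ((D m).re) (Set.Ici 0) t := by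
      exact Complex.reCLM.hasFDerivAt.comp_hasDerivWithinAt t hDm
    have him : HasDerivWithinAt (fun s => (ψ s m).im) ((D m).im) (Set.Ici 0) t := by
      exact Complex.imCLM.hasFDerivAt.comp_hasDerivWithinAt t hDm
    have hV : HasDerivWithinAt (fun s => 1 - ‖ψ s m‖ ^ 2)
        (-(2 * a.re * (D m).re + 2 * a.im * (D m).im)) (Set.Ici 0) t := by
      have h3 : HasDerivWithinAt (fun s => (ψ s m).re ^ 2 + (ψ s m).im ^ 2)
          (2 * a.re * (D m).re + 2 * a.im * (D m).im) (Set.Ici 0) t := by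
        have h4 := (hre.pow 2).add (him.pow 2)
        have e1 : (2 : ℕ) - 1 = 1 := rfl
        exact h4.congr_deriv (by simp only [ha, e1, pow_one, Nat.cast_ofNat])
      have h4 := h3.const_sub 1
      have hfeq : (fun s => 1 - ((ψ s m).re ^ 2 + (ψ s m).im ^ 2)) =
          (fun s => 1 - ‖ψ s m‖ ^ 2) := by
        funext s
        rw [Complex.sq_norm, Complex.normSq_apply]
        ring
      rwa [hfeq] at h4
    have hlt : n - 2 + 1 < n := by omega
    have hidx : (⟨n - 2 + 1, hlt⟩ : Fin n) = m := by
      simp only [hm, Fin.mk.injEq]; omega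
    have hcval : ‖a‖ * c = a.re * b.re + a.im * b.im := by
      have hceq : c = ‖b‖ * Real.cos (a.arg - b.arg) := by
        rw [hc, ladderC, dif_pos hlt, hidx]
      rw [hceq, Real.cos_sub, ← Complex.norm_mul_cos_arg a, ← Complex.norm_mul_sin_arg a,
        ← Complex.norm_mul_cos_arg b, ← Complex.norm_mul_sin_arg b]
      ring
    have hReD : a.re * (D m).re + a.im * (D m).im = u * (‖a‖ * c) := by
      rw [hDmval, hcval]
      simp only [Complex.add_re, Complex.add_im, Complex.mul_re, Complex.mul_im,
        Complex.neg_re, Complex.neg_im, Complex.I_re, Complex.I_im, Complex.ofReal_re,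
        Complex.ofReal_im]
      ring
    have huc : u * c = k (n - 2) * |c| ^ (α (n - 2) + 1) := by
      have hsc : Real.sign c * c = |c| := by
        rcases lt_trichotomy c 0 with h | h | h
        · rw [Real.sign_of_neg h, abs_of_neg h]; ring
        · simp [h]
        · rw [Real.sign_of_pos h, abs_of_pos h]; ring
      rw [Real.rpow_add_one' (abs_nonneg c) (by nlinarith [hαmem.1])]
      calc u * c = k (n-2) * (|c| ^ α (n-2) * (Real.sign c * c)) := by
             simp only [hu, ladderU, ← hc]; ring
        _ = k (n-2) * (|c| ^ α (n-2) * |c|) := by rw [hsc]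
    have hval : -(2 * a.re * (D m).re + 2 * a.im * (D m).im) =
        -2 * k (n-2) * ‖a‖ * |c| ^ (α (n-2) + 1) := by
      linear_combination (-2 : ℝ) * hReD + (-2 * ‖a‖) * huc
    rwa [hval] at hV
  refine ⟨key, ?_⟩
  apply antitoneOn_of_hasDerivWithinAt_nonpos (convex_Ici 0)
    (fun x hx => (key x hx).continuousWithinAt)
    (f' := fun s => -2 * k (n-2) * ‖ψ s m‖ * |ladderC n (n-2) (ψ s)| ^ (α (n-2) + 1))
  · exact fun x hx => ((key x (interior_subset hx)).mono interior_subset)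
  · intro x _
    have h1 : (0:ℝ) ≤ 2 * k (n-2) * ‖ψ x m‖ *
        |ladderC n (n-2) (ψ x)| ^ (α (n-2) + 1) := by
      apply mul_nonneg (mul_nonneg (by linarith) (norm_nonneg _))
      exact Real.rpow_nonneg (abs_nonneg _) _
    linarith
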